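/- Let (g, ·) be a commutative associative algebra over a field K and let D₁, D₂, D₃ : g → g be derivations that pairwise commute (Dᵢ∘Dⱼ = Dⱼ∘Dᵢ for all i, j ∈ {1,2,3}). Then the trilinear bracket ⟦x,y,z⟧ defined as the 3×3 determinant (expanded with the multiplication of g) of the matrix with rows (D₁x, D₁y, D₁z), (D₂x, D₂y, D₂z), (D₃x, D₃y, D₃z) — i.e. ⟦x,y,z⟧ = Σ_{σ∈S₃} sgn(σ) D₁(u_{σ(1)}) · D₂(u_{σ(2)}) · D₃(u_{σ(3)}) with (u₁,u₂,u₃) = (x,y,z) — is skew-symmetric and satisfies the Filippov identity, so (g, ⟦·,·,·⟧) is a 3-Lie algebra. -/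
import Mathlib


/-- `br` is a 3-Lie algebra bracket over `K`: trilinear, alternating (skew-symmetric)
and satisfying the Filippov identity. -/
def Is3LieBracket (K : Type*) [Field K] {A : Type*} [AddCommGroup A] [Module K A]
    (br : A → A → A → A) : Prop :=
  (∀ x₁ x₂ y z, br (x₁ + x₂) y z = br x₁ y z + br x₂ y z) ∧
  (∀ (c : K) (x y z : A), br (c • x) y z = c • br x y z) ∧
  (∀ x y₁ y₂ z, br x (y₁ + y₂) z = br x y₁ z + br x y₂ z) ∧
  (∀ (c : K) (x y z : A), br x (c • y) z = c • br x y z) ∧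
  (∀ x y z₁ z₂, br x y (z₁ + z₂) = br x y z₁ + br x y z₂) ∧
  (∀ (c : K) (x y z : A), br x y (c • z) = c • br x y z) ∧
  (∀ x y, br x x y = 0) ∧ (∀ x y, br x y y = 0) ∧ (∀ x y, br x y x = 0) ∧
  (∀ x y a b c, br x y (br a b c) = br (br x y a) b c + br a (br x y b) c + br a b (br x y c))

/-- `N` is a Nijenhuis operator on the 3-Lie algebra `(A, br)`:
`[Nx,Ny,Nz] = N([x,y,z]_N²)` where
`[x,y,z]_N¹ = [Nx,y,z] + [x,Ny,z] + [x,y,Nz] − N[x,y,z]` and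
`[x,y,z]_N² = [Nx,Ny,z] + [Nx,y,Nz] + [x,Ny,Nz] − N([x,y,z]_N¹)`. -/
def IsNijenhuis3 (K : Type*) [Field K] {A : Type*} [AddCommGroup A] [Module K A]
    (br : A → A → A → A) (N : A →ₗ[K] A) : Prop :=
  ∀ x y z : A,
    br (N x) (N y) (N z)
      = N (br (N x) (N y) z + br (N x) y (N z) + br x (N y) (N z)
          - N (br (N x) y z + br x (N y) z + br x y (N z) - N (br x y z)))

/-- The 3×3 determinant bracket with rows `(D₁x,D₁y,D₁z)`, `(D₂x,D₂y,D₂z)`,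
`(D₃x,D₃y,D₃z)`, expanded with the multiplication of `A`:
`⟦x,y,z⟧ = ∑_{σ∈S₃} sgn(σ) D₁(u_{σ(1)}) · D₂(u_{σ(2)}) · D₃(u_{σ(3)})`. -/
def det3Bracket {K : Type*} [Field K] {A : Type*} [NonUnitalCommRing A] [Module K A]
    (D₁ D₂ D₃ : A →ₗ[K] A) (x y z : A) : A :=
  ∑ σ : Equiv.Perm (Fin 3),
    (Equiv.Perm.sign σ : ℤ) •
      (D₁ ((![x, y, z]) (σ 0)) * (D₂ ((![x, y, z]) (σ 1)) * D₃ ((![x, y, z]) (σ 2))))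

set_option maxHeartbeats 4000000 in
/-- If `D₁, D₂, D₃` are pairwise commuting derivations of a
commutative associative algebra `(A, *)` over `K`, then the determinant bracket
with rows `(D₁x,D₁y,D₁z)`, `(D₂x,D₂y,D₂z)`, `(D₃x,D₃y,D₃z)` is a 3-Lie algebra
bracket on `A`. -/
theorem three_derivations_threeLie
    {K : Type*} [Field K] {A : Type*} [NonUnitalCommRing A] [Module K A]
    [SMulCommClass K A A] [IsScalarTower K A A]
    (D₁ D₂ D₃ : A →ₗ[K] A)
    (hD₁ : ∀ x y : A, D₁ (x * y) = D₁ x * y + x * D₁ y)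
    (hD₂ : ∀ x y : A, D₂ (x * y) = D₂ x * y + x * D₂ y)
    (hD₃ : ∀ x y : A, D₃ (x * y) = D₃ x * y + x * D₃ y)
    (h12 : ∀ x : A, D₁ (D₂ x) = D₂ (D₁ x))
    (h13 : ∀ x : A, D₁ (D₃ x) = D₃ (D₁ x))
    (h23 : ∀ x : A, D₂ (D₃ x) = D₃ (D₂ x)) :
    Is3LieBracket K (det3Bracket D₁ D₂ D₃) := by
  have key : ∀ x y z : A, det3Bracket D₁ D₂ D₃ x y z
      = D₁ x * (D₂ y * D₃ z) - D₁ x * (D₂ z * D₃ y) - D₁ y * (D₂ x * D₃ z)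
        + D₁ y * (D₂ z * D₃ x) + D₁ z * (D₂ x * D₃ y) - D₁ z * (D₂ y * D₃ x) := by
    intro x y z
    rw [det3Bracket]
    rw [show (Finset.univ : Finset (Equiv.Perm (Fin 3))) =
      {1, Equiv.swap 0 1, Equiv.swap 0 2, Equiv.swap 1 2,
       Equiv.swap 0 1 * Equiv.swap 1 2, Equiv.swap 0 2 * Equiv.swap 1 2} from by decide]
    rw [Finset.sum_insert (by decide), Finset.sum_insert (by decide),
        Finset.sum_insert (by decide), Finset.sum_insert (by decide),
        Finset.sum_insert (by decide), Finset.sum_singleton]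
    have e1 : ((Equiv.Perm.sign (1 : Equiv.Perm (Fin 3)) : ℤ)) = 1 := by decide
    have e2 : ((Equiv.Perm.sign (Equiv.swap (0:Fin 3) 1) : ℤ)) = -1 := by decide
    have e3 : ((Equiv.Perm.sign (Equiv.swap (0:Fin 3) 2) : ℤ)) = -1 := by decide
    have e4 : ((Equiv.Perm.sign (Equiv.swap (1:Fin 3) 2) : ℤ)) = -1 := by decide
    have e5 : ((Equiv.Perm.sign (Equiv.swap (0:Fin 3) 1 * Equiv.swap 1 2) : ℤ)) = 1 := by decide
    have e6 : ((Equiv.Perm.sign (Equiv.swap (0:Fin 3) 2 * Equiv.swap 1 2) : ℤ)) = 1 := by decide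
    rw [e1, e2, e3, e4, e5, e6]
    have m0 : (![x,y,z]) (0 : Fin 3) = x := rfl
    have m1 : (![x,y,z]) (1 : Fin 3) = y := rfl
    have m2 : (![x,y,z]) (2 : Fin 3) = z := rfl
    simp [Equiv.swap_apply_def, Equiv.Perm.one_apply, Equiv.Perm.mul_apply, m0, m1, m2]
    abel
  have inj : Function.Injective ((↑) : A → Unitization K A) := Unitization.inr_injective
  refine ⟨?_, ?_, ?_, ?_, ?_, ?_, ?_, ?_, ?_, ?_⟩
  · intro x₁ x₂ y z
    simp only [key, map_add]
    apply inj
    simp only [Unitization.inr_add, Unitization.inr_mul, Unitization.inr_sub]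
    ring
  · intro c x y z
    simp only [key, map_smul, smul_mul_assoc, mul_smul_comm, smul_sub, smul_add]
  · intro x y₁ y₂ z
    simp only [key, map_add]
    apply inj
    simp only [Unitization.inr_add, Unitization.inr_mul, Unitization.inr_sub]
    ring
  · intro c x y z
    simp only [key, map_smul, smul_mul_assoc, mul_smul_comm, smul_sub, smul_add]
  · intro x y z₁ z₂
    simp only [key, map_add]
    apply inj
    simp only [Unitization.inr_add, Unitization.inr_mul, Unitization.inr_sub]
    ring
  · intro c x y z
    simp only [key, map_smul, smul_mul_assoc, mul_smul_comm, smul_sub, smul_add]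
  · intro x y
    simp only [key]
    apply inj
    simp only [Unitization.inr_add, Unitization.inr_mul, Unitization.inr_sub,
      Unitization.inr_zero]
    ring
  · intro x y
    simp only [key]
    apply inj
    simp only [Unitization.inr_add, Unitization.inr_mul, Unitization.inr_sub,
      Unitization.inr_zero]
    ring
  · intro x y
    simp only [key]
    apply inj
    simp only [Unitization.inr_add, Unitization.inr_mul, Unitization.inr_sub,
      Unitization.inr_zero]
    ring
  · intro x y a b c
    simp only [key, map_add, map_sub, hD₁, hD₂, hD₃, h12, h13, h23,
      mul_add, add_mul, mul_sub, sub_mul]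
    apply inj
    simp only [Unitization.inr_add, Unitization.inr_mul, Unitization.inr_sub]
    ring
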